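/- For the modified h-vector h_τ^λ one has the identity t^{codim τ} h_τ^λ(t^{-1}) = (t−1)^{codim τ} Σ_{σ ⊇ τ} ∏_{ρ_i ⊆ σ∖τ} 1/(t^{λ(b_i)+1} − 1), where the sum is over cones σ of Σ containing τ. -/

import Mathlib

/-- The monomial `t^e` with rational exponent, as a Hahn series. -/
noncomputable def tpow (e : ℚ) : HahnSeries ℚ ℚ := HahnSeries.single e 1

/-- The modified `h`-vector `h_τ^λ`, evaluated with a general monomial assignment `s`
(so that `s = tpow` gives `h_τ^λ(t)`, and `s = fun e => tpow (-e)` gives `h_τ^λ(t⁻¹)`):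
`h_τ^λ(t) = ∑_{σ ⊇ τ} t^{∑_{ρ_i ⊆ σ∖τ} λ(b_i)} t^{dim σ - dim τ} (1-t)^{codim σ}
∏_{ρ_i ⊆ σ∖τ} (1-t)/(1-t^{λ(b_i)+1})`. -/
noncomputable def hTauGen (d r : ℕ) (cones : Finset (Finset (Fin r))) (lb : Fin r → ℚ)
    (s : ℚ → HahnSeries ℚ ℚ) (τ : Finset (Fin r)) : HahnSeries ℚ ℚ :=
  ∑ σ ∈ cones, if τ ⊆ σ then
    s (∑ i ∈ σ \ τ, lb i) * s ((σ.card : ℚ) - (τ.card : ℚ)) *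
      (1 - s 1) ^ (d - σ.card) *
      ∏ i ∈ σ \ τ, (1 - s 1) / (1 - s (lb i + 1))
  else 0

lemma tpow_add (a b : ℚ) : tpow (a + b) = tpow a * tpow b := by
  simp [tpow, HahnSeries.single_mul_single]

lemma tpow_zero : tpow 0 = 1 := by simp [tpow]

lemma tpow_ne_one {a : ℚ} (h : a ≠ 0) : tpow a ≠ 1 := by
  intro he
  have := congrArg (fun x => HahnSeries.coeff x a) he
  simp [tpow, HahnSeries.coeff_single, h] at this

lemma tpow_inv (a : ℚ) : (tpow a)⁻¹ = tpow (-a) := by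
  refine inv_eq_of_mul_eq_one_right ?_
  rw [← tpow_add]; simp [tpow_zero]

lemma tpow_sum {α : Type*} (s : Finset α) (f : α → ℚ) :
    tpow (∑ i ∈ s, f i) = ∏ i ∈ s, tpow (f i) := by
  classical
  induction s using Finset.cons_induction with
  | empty => simp [tpow_zero]
  | cons a s ha ih => simp [Finset.sum_insert ha, Finset.prod_insert ha, tpow_add, ih]

lemma tpow_pow (a : ℚ) (n : ℕ) : tpow a ^ n = tpow (n * a) := by
  induction n with
  | zero => simp [tpow_zero]
  | succ n ih =>
    rw [pow_succ, ih, ← tpow_add]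
    congr 1; push_cast; ring

lemma one_sub_tpow_neg (b : ℚ) : 1 - tpow (-b) = tpow (-b) * (tpow b - 1) := by
  rw [mul_sub, mul_one, ← tpow_add, neg_add_cancel, tpow_zero]

lemma key (d : ℕ) {r : ℕ} (lb : Fin r → ℚ) (hlb : ∀ i, -1 < lb i)
    (τ σ : Finset (Fin r)) (hsub : τ ⊆ σ) (hd : σ.card ≤ d) :
    tpow ((d : ℚ) - (τ.card : ℚ)) *
      (tpow (-(∑ i ∈ σ \ τ, lb i)) * tpow (-((σ.card : ℚ) - (τ.card : ℚ))) *
        (1 - tpow (-1)) ^ (d - σ.card) *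
        ∏ i ∈ σ \ τ, (1 - tpow (-1)) / (1 - tpow (-(lb i + 1))))
    = (tpow 1 - 1) ^ (d - τ.card) * ∏ i ∈ σ \ τ, 1 / (tpow (lb i + 1) - 1) := by
  have hfac : ∀ i ∈ σ \ τ, (1 - tpow (-1)) / (1 - tpow (-(lb i + 1)))
      = tpow (lb i) * ((tpow 1 - 1) * (tpow (lb i + 1) - 1)⁻¹) := by
    intro i _
    rw [one_sub_tpow_neg 1, one_sub_tpow_neg (lb i + 1), div_eq_mul_inv, mul_inv,
      tpow_inv, neg_neg]
    have h1 : tpow (-1) * tpow (lb i + 1) = tpow (lb i) := by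
      rw [← tpow_add]; congr 1; ring
    rw [← h1]; ring
  have hprod : (∏ i ∈ σ \ τ, (1 - tpow (-1)) / (1 - tpow (-(lb i + 1))))
      = tpow (∑ i ∈ σ \ τ, lb i) *
        ((tpow 1 - 1) ^ (σ \ τ).card * ∏ i ∈ σ \ τ, (tpow (lb i + 1) - 1)⁻¹) := by
    rw [Finset.prod_congr rfl hfac, Finset.prod_mul_distrib, Finset.prod_mul_distrib,
      Finset.prod_const, ← tpow_sum]
  have hpow : (1 - tpow (-1)) ^ (d - σ.card)
      = tpow (-((d - σ.card : ℕ) : ℚ)) * (tpow 1 - 1) ^ (d - σ.card) := by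
    rw [one_sub_tpow_neg 1, mul_pow, tpow_pow, mul_neg_one]
  rw [hprod, hpow]
  have hct : τ.card ≤ σ.card := Finset.card_le_card hsub
  have hcast : ((d - σ.card : ℕ) : ℚ) = (d : ℚ) - (σ.card : ℚ) := by
    rw [Nat.cast_sub hd]
  calc tpow ((d : ℚ) - (τ.card : ℚ)) *
      (tpow (-(∑ i ∈ σ \ τ, lb i)) * tpow (-((σ.card : ℚ) - (τ.card : ℚ))) *
        (tpow (-((d - σ.card : ℕ) : ℚ)) * (tpow 1 - 1) ^ (d - σ.card)) *
        (tpow (∑ i ∈ σ \ τ, lb i) *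
          ((tpow 1 - 1) ^ (σ \ τ).card * ∏ i ∈ σ \ τ, (tpow (lb i + 1) - 1)⁻¹)))
      = (tpow ((d : ℚ) - (τ.card : ℚ)) * tpow (-(∑ i ∈ σ \ τ, lb i)) *
          tpow (-((σ.card : ℚ) - (τ.card : ℚ))) * tpow (-((d - σ.card : ℕ) : ℚ)) *
          tpow (∑ i ∈ σ \ τ, lb i)) *
        ((tpow 1 - 1) ^ (d - σ.card) * (tpow 1 - 1) ^ (σ \ τ).card *
          ∏ i ∈ σ \ τ, (tpow (lb i + 1) - 1)⁻¹) := by ring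
    _ = (tpow 1 - 1) ^ (d - τ.card) * ∏ i ∈ σ \ τ, 1 / (tpow (lb i + 1) - 1) := by
        rw [← tpow_add, ← tpow_add, ← tpow_add, ← tpow_add]
        have hE : (d : ℚ) - (τ.card : ℚ) + -(∑ i ∈ σ \ τ, lb i) +
            -((σ.card : ℚ) - (τ.card : ℚ)) + -((d - σ.card : ℕ) : ℚ) +
            (∑ i ∈ σ \ τ, lb i) = 0 := by rw [hcast]; ring
        rw [hE, tpow_zero, one_mul, ← pow_add, Finset.card_sdiff_of_subset hsub]
        have : d - σ.card + (σ.card - τ.card) = d - τ.card := by omega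
        rw [this]
        simp [one_div]

/-- For the modified `h`-vector `h_τ^λ` one has
`t^{codim τ} h_τ^λ(t⁻¹) = (t-1)^{codim τ} ∑_{σ ⊇ τ} ∏_{ρ_i ⊆ σ∖τ} 1/(t^{λ(b_i)+1} - 1)`,
as an identity in the field of Hahn series over `ℚ` with rational exponents. -/
theorem stmt_11 (d r : ℕ) (cones : Finset (Finset (Fin r)))
    (hdown : ∀ σ ∈ cones, ∀ τ' ⊆ σ, τ' ∈ cones)
    (hdim : ∀ σ ∈ cones, σ.card ≤ d)
    (lb : Fin r → ℚ) (hlb : ∀ i, -1 < lb i)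
    (τ : Finset (Fin r)) (hτ : τ ∈ cones) :
    tpow ((d : ℚ) - (τ.card : ℚ)) * hTauGen d r cones lb (fun e => tpow (-e)) τ
      = (tpow 1 - 1) ^ (d - τ.card) *
          ∑ σ ∈ cones, (if τ ⊆ σ then
            ∏ i ∈ σ \ τ, 1 / (tpow (lb i + 1) - 1) else 0) := by
  rw [hTauGen, Finset.mul_sum, Finset.mul_sum]
  refine Finset.sum_congr rfl fun σ hσ => ?_
  by_cases hsub : τ ⊆ σ
  · simp only [if_pos hsub]
    exact key d lb hlb τ σ hsub (hdim σ hσ)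
  · simp [hsub]
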